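/- For any integer b ≥ 2 and any real α with α ∉ ℤ, setting j₀ = ⌊log(b/((b+1)‖α‖))/log b⌋, one has j₀ ≥ 0 and ‖α b^{j₀}‖ ≥ 1/(b+1), where ‖·‖ denotes distance to the nearest integer. -/

import Mathlib

/-- Distance from a real number to the nearest integer. -/
noncomputable def nint (x : ℝ) : ℝ := |x - round x|

lemma nint_add_int (x : ℝ) (n : ℤ) : nint (x + n) = nint x := by
  simp [nint, round_add_intCast]

lemma min_le_nint (y : ℝ) : min |y| (1 - |y|) ≤ nint y := by
  rcases eq_or_ne (round y) 0 with h | h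
  · simp [nint, h]
  · have h1 : (1 : ℝ) ≤ |(round y : ℝ)| := by
      rw [← Int.cast_abs]
      exact_mod_cast Int.one_le_abs h
    have h2 : |(round y : ℝ)| - |y| ≤ |y - round y| := by
      rw [abs_sub_comm]
      exact abs_sub_abs_le_abs_sub _ _
    refine le_trans (min_le_right _ _) ?_
    unfold nint
    linarith

theorem stmt16 (b : ℕ) (hb : 2 ≤ b) (α : ℝ) (hα : ¬∃ n : ℤ, α = n) :
    0 ≤ ⌊Real.log ((b : ℝ) / (((b : ℝ) + 1) * nint α)) / Real.log b⌋ ∧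
      1 / ((b : ℝ) + 1) ≤
        nint (α * (b : ℝ) ^ ⌊Real.log ((b : ℝ) / (((b : ℝ) + 1) * nint α)) / Real.log b⌋) := by
  have hb1 : (1:ℝ) < (b:ℝ) := by exact_mod_cast lt_of_lt_of_le one_lt_two hb
  have hb0 : (0:ℝ) < (b:ℝ) := lt_trans one_pos hb1
  set ε := nint α with hεdef
  have hε0 : 0 < ε := by
    rw [hεdef, nint, abs_pos, sub_ne_zero]
    intro h
    exact hα ⟨round α, h⟩
  have hεh : ε ≤ 1/2 := abs_sub_round α
  set x := (b:ℝ) / (((b:ℝ)+1) * ε) with hxdef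
  have hden : 0 < ((b:ℝ)+1) * ε := by positivity
  have hx1 : 1 < x := by
    rw [hxdef, lt_div_iff₀ hden]
    nlinarith
  have hx0 : 0 < x := lt_trans one_pos hx1
  set j := ⌊Real.log x / Real.log (b:ℝ)⌋ with hjdef
  have hj0 : 0 ≤ j :=
    Int.floor_nonneg.2 (div_nonneg (Real.log_nonneg hx1.le) (Real.log_nonneg hb1.le))
  have hrpow : (b:ℝ) ^ (Real.log x / Real.log (b:ℝ)) = x := by
    rw [Real.log_div_log, Real.rpow_logb hb0 hb1.ne' hx0]
  have hpow_le : (b:ℝ)^j ≤ x := by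
    calc (b:ℝ)^j = (b:ℝ) ^ ((j:ℝ)) := (Real.rpow_intCast _ _).symm
      _ ≤ (b:ℝ) ^ (Real.log x / Real.log (b:ℝ)) :=
          Real.rpow_le_rpow_of_exponent_le hb1.le (Int.floor_le _)
      _ = x := hrpow
  have hx_lt : x < (b:ℝ)^(j+1) := by
    calc x = (b:ℝ) ^ (Real.log x / Real.log (b:ℝ)) := hrpow.symm
      _ < (b:ℝ) ^ (((j:ℝ)) + 1) :=
          Real.rpow_lt_rpow_of_exponent_lt hb1 (Int.lt_floor_add_one _)
      _ = (b:ℝ)^(j+1) := by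
          rw [← Real.rpow_intCast (b:ℝ) (j+1)]
          push_cast
          ring_nf
  have hjpos : 0 < (b:ℝ)^j := zpow_pos hb0 j
  have h1 : ε * (b:ℝ)^j ≤ (b:ℝ)/((b:ℝ)+1) := by
    have h := (le_div_iff₀ hden).1 hpow_le
    rw [le_div_iff₀ (by positivity : (0:ℝ) < (b:ℝ)+1)]
    nlinarith
  have h2 : 1/((b:ℝ)+1) < ε * (b:ℝ)^j := by
    have h := (div_lt_iff₀ hden).1 hx_lt
    have hzz : (b:ℝ)^(j+1) = (b:ℝ)^j * (b:ℝ) := zpow_add_one₀ hb0.ne' j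
    rw [div_lt_iff₀ (by positivity : (0:ℝ) < (b:ℝ)+1)]
    nlinarith
  refine ⟨hj0, ?_⟩
  -- rewrite α * b^j as δ * b^j + integer
  set m := round α with hmdef
  set δ := α - (m:ℝ) with hδdef
  have hbj : ((b:ℝ))^j = ((b^(j.toNat) : ℕ) : ℝ) := by
    push_cast
    rw [← zpow_natCast (b:ℝ) j.toNat, Int.toNat_of_nonneg hj0]
  have hsplit : α * (b:ℝ)^j = δ * (b:ℝ)^j + ((m * (b:ℕ)^(j.toNat) : ℤ) : ℝ) := by
    rw [hδdef]
    push_cast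
    rw [hbj]
    push_cast
    ring
  rw [hsplit, nint_add_int]
  have habs : |δ * (b:ℝ)^j| = ε * (b:ℝ)^j := by
    rw [abs_mul, abs_of_pos hjpos, hδdef, hεdef, nint, hmdef]
  have hone : (1:ℝ)/((b:ℝ)+1) + (b:ℝ)/((b:ℝ)+1) = 1 := by
    field_simp
    ring
  refine le_trans ?_ (min_le_nint (δ * (b:ℝ)^j))
  rw [habs]
  refine le_min h2.le ?_
  linarith
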